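/- Let P be a finite connected poset with n = |P|. If T is a collection of proper tubes that is not a proper tubing (some pair is neither nested nor disjoint, or the relation ≺ on disjoint tubes has a cycle), then the intersection of the hyperplanes H_τ = {α_τ = n^{2|τ|}} over τ ∈ T with the polytope 𝒜(P) = ∩_{σ proper tube} h_σ ∩ H_P is empty. -/

import Mathlib

open Finset

section Defs
variable {α : Type*} [Fintype α] [PartialOrder α] [DecidableEq α]

/-- `τ` is connected as an induced subgraph of the Hasse diagram of the poset. -/
def IsConnectedIn (τ : Finset α) : Prop :=
  ∀ a ∈ τ, ∀ b ∈ τ,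
    Relation.ReflTransGen (fun x y => x ∈ τ ∧ y ∈ τ ∧ (x ⋖ y ∨ y ⋖ x)) a b

/-- `τ` is (order-)convex. -/
def IsConvexIn (τ : Finset α) : Prop :=
  ∀ a ∈ τ, ∀ c ∈ τ, ∀ b, a ≤ b → b ≤ c → b ∈ τ

/-- A tube: connected, convex, of size at least 2. -/
def IsTube (τ : Finset α) : Prop :=
  IsConnectedIn τ ∧ IsConvexIn τ ∧ 2 ≤ τ.card

/-- A proper tube additionally has at most `|P| - 1` elements. -/
def IsProperTube (τ : Finset α) : Prop :=
  IsTube τ ∧ τ.card ≤ Fintype.card α - 1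

open Classical in
/-- `α_τ(p) = Σ_{i ⋖ j, i,j ∈ τ} (p j - p i)`, over covering relations inside `τ`. -/
noncomputable def alphaF (τ : Finset α) (p : α → ℝ) : ℝ :=
  ∑ i ∈ τ, ∑ j ∈ τ, if i ⋖ j then p j - p i else 0

/-- `diam_S(p) = max_{i,j ∈ S} |p i - p j|`. -/
noncomputable def diamF (S : Finset α) (p : α → ℝ) : ℝ :=
  if h : (S ×ˢ S).Nonempty then (S ×ˢ S).sup' h fun ij => |p ij.1 - p ij.2| else 0

open Classical in
/-- `conv S = {b : ∃ a c ∈ S, a ≤ b ≤ c}`. -/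
noncomputable def convF (S : Finset α) : Finset α :=
  univ.filter fun b => ∃ a ∈ S, ∃ c ∈ S, a ≤ b ∧ b ≤ c

/-- The relation `σ ≺ τ` on disjoint tubes of a tubing. -/
def TubingRel (T : Finset (Finset α)) (σ τ : Finset α) : Prop :=
  σ ∈ T ∧ τ ∈ T ∧ (∀ x ∈ σ, x ∉ τ) ∧ ∃ a ∈ σ, ∃ b ∈ τ, a < b

/-- A proper tubing: proper tubes, pairwise nested or disjoint, with acyclic `≺`. -/
def IsProperTubing (T : Finset (Finset α)) : Prop :=
  (∀ τ ∈ T, IsProperTube τ) ∧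
  (∀ σ ∈ T, ∀ τ ∈ T, σ ⊆ τ ∨ τ ⊆ σ ∨ ∀ x ∈ σ, x ∉ τ) ∧
  ∀ τ ∈ T, ¬ Relation.TransGen (TubingRel T) τ τ

/-- A maximal proper tubing. -/
def IsMaximalTubing (T : Finset (Finset α)) : Prop :=
  IsProperTubing T ∧ ∀ T', IsProperTubing T' → T ⊆ T' → T = T'

end Defs

section Aux
attribute [local instance] Classical.propDecidable
set_option linter.unusedSectionVars false
variable {α : Type*} [Fintype α] [PartialOrder α] [DecidableEq α]

lemma exists_cov_le {a b : α} (h : a < b) : ∃ c, a ⋖ c ∧ c ≤ b := by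
  obtain ⟨c, hc, hmin⟩ := (univ.filter fun x => a < x ∧ x ≤ b).exists_minimal
    ⟨b, by simp [h]⟩
  simp only [Finset.mem_filter, Finset.mem_univ, true_and] at hc hmin
  refine ⟨c, ⟨hc.1, fun z haz hzc => ?_⟩, hc.2⟩
  exact hzc.not_ge (hmin ⟨haz, (le_of_lt hzc).trans hc.2⟩ hzc.le)

private lemma mono_aux (p : α → ℝ) (C : ℝ) (hC : 0 ≤ C)
    (hcov : ∀ i j : α, i ⋖ j → C ≤ p j - p i) (b : α) :
    ∀ k : ℕ, ∀ x : α, (univ.filter fun z => x < z ∧ z ≤ b).card ≤ k →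
      x ≤ b → (p x ≤ p b ∧ (x < b → C ≤ p b - p x)) := by
  intro k
  induction k with
  | zero =>
    intro x hcard hxb
    rcases eq_or_lt_of_le hxb with rfl | hlt
    · exact ⟨le_rfl, fun h => absurd h (lt_irrefl _)⟩
    · exfalso
      have hm : b ∈ univ.filter fun z => x < z ∧ z ≤ b := by simp [hlt]
      have := Finset.card_pos.mpr ⟨b, hm⟩
      omega
  | succ k ih =>
    intro x hcard hxb
    rcases eq_or_lt_of_le hxb with rfl | hlt
    · exact ⟨le_rfl, fun h => absurd h (lt_irrefl _)⟩
    · obtain ⟨c, hxc, hcb⟩ := exists_cov_le hlt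
      have hsub : (univ.filter fun z => c < z ∧ z ≤ b) ⊂ (univ.filter fun z => x < z ∧ z ≤ b) := by
        refine Finset.ssubset_iff_of_subset ?_ |>.mpr ⟨c, by simp [hxc.lt, hcb], by simp⟩
        intro z hz
        simp only [Finset.mem_filter, Finset.mem_univ, true_and] at hz ⊢
        exact ⟨hxc.lt.trans hz.1, hz.2⟩
      have hlt' := Finset.card_lt_card hsub
      have hrec := ih c (by omega) hcb
      have h1 := hcov x c hxc
      constructor
      · nlinarith [hrec.1]
      · intro _
        nlinarith [hrec.1]

lemma mono_of_cov (p : α → ℝ) (C : ℝ) (hC : 0 ≤ C)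
    (hcov : ∀ i j : α, i ⋖ j → C ≤ p j - p i) {a b : α} (h : a ≤ b) : p a ≤ p b :=
  (mono_aux p C hC hcov b _ a le_rfl h).1

lemma gap_of_cov (p : α → ℝ) (C : ℝ) (hC : 0 ≤ C)
    (hcov : ∀ i j : α, i ⋖ j → C ≤ p j - p i) {a b : α} (h : a < b) : C ≤ p b - p a :=
  (mono_aux p C hC hcov b _ a le_rfl h.le).2 h

/-- chain within interval [a,b] -/
lemma chain_interval {a b : α} (hab : a ≤ b) :
    Relation.ReflTransGen
      (fun x y => (a ≤ x ∧ x ≤ b) ∧ (a ≤ y ∧ y ≤ b) ∧ (x ⋖ y ∨ y ⋖ x)) a b := by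
  suffices H : ∀ k : ℕ, ∀ x : α, (univ.filter fun z => x < z ∧ z ≤ b).card ≤ k →
      a ≤ x → x ≤ b → Relation.ReflTransGen
      (fun x y => (a ≤ x ∧ x ≤ b) ∧ (a ≤ y ∧ y ≤ b) ∧ (x ⋖ y ∨ y ⋖ x)) x b by
    exact H _ a le_rfl le_rfl hab
  intro k
  induction k with
  | zero =>
    intro x hcard hax hxb
    rcases eq_or_lt_of_le hxb with rfl | hlt
    · exact Relation.ReflTransGen.refl
    · exfalso
      have hm : b ∈ univ.filter fun z => x < z ∧ z ≤ b := by simp [hlt]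
      have := Finset.card_pos.mpr ⟨b, hm⟩
      omega
  | succ k ih =>
    intro x hcard hax hxb
    rcases eq_or_lt_of_le hxb with rfl | hlt
    · exact Relation.ReflTransGen.refl
    · obtain ⟨c, hxc, hcb⟩ := exists_cov_le hlt
      have hsub : (univ.filter fun z => c < z ∧ z ≤ b) ⊂ (univ.filter fun z => x < z ∧ z ≤ b) := by
        refine Finset.ssubset_iff_of_subset ?_ |>.mpr ⟨c, by simp [hxc.lt, hcb], by simp⟩
        intro z hz
        simp only [Finset.mem_filter, Finset.mem_univ, true_and] at hz ⊢
        exact ⟨hxc.lt.trans hz.1, hz.2⟩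
      have hlt' := Finset.card_lt_card hsub
      have hrec := ih c (by omega) (hax.trans hxc.lt.le) hcb
      exact Relation.ReflTransGen.head ⟨⟨hax, hxb⟩, ⟨hax.trans hxc.lt.le, hcb⟩, Or.inl hxc⟩ hrec
end Aux

section Aux
attribute [local instance] Classical.propDecidable
set_option linter.unusedSectionVars false
variable {α : Type*} [Fintype α] [PartialOrder α] [DecidableEq α]

lemma alphaF_eq_filter (S : Finset α) (p : α → ℝ) :
    alphaF S p = ∑ q ∈ (S ×ˢ S).filter (fun q => q.1 ⋖ q.2), (p q.2 - p q.1) := by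
  rw [alphaF, Finset.sum_filter, Finset.sum_product]

lemma alphaF_nonneg (S : Finset α) (p : α → ℝ)
    (hmono : ∀ i j : α, i ⋖ j → 0 ≤ p j - p i) : 0 ≤ alphaF S p := by
  rw [alphaF_eq_filter]
  refine Finset.sum_nonneg fun q hq => ?_
  simp only [Finset.mem_filter] at hq
  exact hmono _ _ hq.2

private def hasseG (S : Finset α) : SimpleGraph α where
  Adj x y := x ∈ S ∧ y ∈ S ∧ (x ⋖ y ∨ y ⋖ x)
  symm := ⟨by
    intro x y ⟨h1, h2, h3⟩
    exact ⟨h2, h1, h3.symm⟩⟩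
  loopless := ⟨by
    intro x ⟨_, _, h⟩
    rcases h with h | h <;> exact absurd h.lt (lt_irrefl _)⟩

private noncomputable def wtF (p : α → ℝ) : Sym2 α → ℝ :=
  Sym2.lift ⟨fun x y => |p x - p y|, fun x y => abs_sub_comm _ _⟩

private lemma walk_bound (p : α → ℝ) (S : Finset α) :
    ∀ {u v : α} (w : (hasseG S).Walk u v), |p u - p v| ≤ (w.edges.map (wtF p)).sum := by
  intro u v w
  induction w with
  | nil => simp
  | @cons u x v h w ih =>
    have : |p u - p v| ≤ |p u - p x| + |p x - p v| := by
      have := abs_sub_le (p u) (p x) (p v); linarith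
    simp only [SimpleGraph.Walk.edges_cons, List.map_cons, List.sum_cons]
    have hwt : wtF p s(u, x) = |p u - p x| := rfl
    linarith
  
lemma abs_sub_le_alphaF (p : α → ℝ)
    (hmono : ∀ i j : α, i ⋖ j → 0 ≤ p j - p i)
    (S : Finset α) {a b : α}
    (hab : Relation.ReflTransGen (fun x y => x ∈ S ∧ y ∈ S ∧ (x ⋖ y ∨ y ⋖ x)) a b) :
    |p a - p b| ≤ alphaF S p := by
  have hreach : (hasseG S).Reachable a b :=
    (SimpleGraph.reachable_iff_reflTransGen a b).2 hab
  obtain ⟨w0⟩ := hreach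
  set w := w0.bypass with hw
  have hnodup : w.edges.Nodup := w0.bypass_isPath.edges_nodup
  have hbound := walk_bound p S w
  set C := ((S ×ˢ S).filter (fun q => q.1 ⋖ q.2)).image (fun q => s(q.1, q.2)) with hC
  have hsubC : w.edges.toFinset ⊆ C := by
    intro e he
    rw [List.mem_toFinset] at he
    have hE := w.edges_subset_edgeSet he
    induction e with
    | h x y =>
      rw [SimpleGraph.mem_edgeSet] at hE
      obtain ⟨hx, hy, hcov⟩ := hE
      rcases hcov with hc | hc
      · exact Finset.mem_image.2 ⟨(x, y), by simp [Finset.mem_filter, hx, hy, hc], rfl⟩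
      · exact Finset.mem_image.2 ⟨(y, x), by simp [Finset.mem_filter, hx, hy, hc], Sym2.eq_swap⟩
  have hsum1 : (w.edges.map (wtF p)).sum = ∑ e ∈ w.edges.toFinset, wtF p e :=
    (List.sum_toFinset _ hnodup).symm
  have hsum2 : ∑ e ∈ w.edges.toFinset, wtF p e ≤ ∑ e ∈ C, wtF p e := by
    refine Finset.sum_le_sum_of_subset_of_nonneg hsubC fun e _ _ => ?_
    induction e with
    | h x y => exact abs_nonneg _
  have hsum3 : ∑ e ∈ C, wtF p e = alphaF S p := by
    rw [hC, Finset.sum_image, alphaF_eq_filter]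
    · refine Finset.sum_congr rfl fun q hq => ?_
      simp only [Finset.mem_filter] at hq
      have : wtF p s(q.1, q.2) = |p q.1 - p q.2| := rfl
      rw [this, abs_sub_comm, abs_of_nonneg (hmono _ _ hq.2)]
    · intro q hq r hr hqr
      simp only [Finset.mem_coe, Finset.mem_filter] at hq hr
      rcases Sym2.eq_iff.1 hqr with ⟨h1, h2⟩ | ⟨h1, h2⟩
      · exact Prod.ext h1 h2
      · exfalso
        have := hq.2
        rw [h1, h2] at this
        exact absurd hr.2.lt (asymm this.lt)
  linarith
end Aux

section Aux
attribute [local instance] Classical.propDecidable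
set_option linter.unusedSectionVars false
variable {α : Type*} [Fintype α] [PartialOrder α] [DecidableEq α]

lemma lt_pairs_card :
    2 * ((univ ×ˢ univ : Finset (α × α)).filter (fun q => q.1 < q.2)).card ≤
      Fintype.card α * Fintype.card α - Fintype.card α := by
  set L := (univ ×ˢ univ : Finset (α × α)).filter (fun q => q.1 < q.2) with hL
  set G := (univ ×ˢ univ : Finset (α × α)).filter (fun q => q.2 < q.1) with hG
  have hcard : L.card = G.card := by
    refine Finset.card_bij (fun q _ => (q.2, q.1)) ?_ ?_ ?_
    · intro q hq
      simp only [hL, Finset.mem_filter] at hq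
      simp only [hG, Finset.mem_filter]
      exact ⟨by simp, hq.2⟩
    · intro q hq r hr h
      exact Prod.ext (congrArg Prod.snd h) (congrArg Prod.fst h)
    · intro q hq
      refine ⟨(q.2, q.1), ?_, rfl⟩
      simp only [hG, Finset.mem_filter] at hq
      simp only [hL, Finset.mem_filter]
      exact ⟨by simp, hq.2⟩
  have hdisj : Disjoint L G := by
    rw [Finset.disjoint_left]
    intro q hq1 hq2
    simp only [hL, hG, Finset.mem_filter] at hq1 hq2
    exact absurd hq2.2 (asymm hq1.2)
  have hsub : L ∪ G ⊆ (univ : Finset α).offDiag := by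
    intro q hq
    rcases Finset.mem_union.1 hq with h | h <;>
      simp only [hL, hG, Finset.mem_filter] at h <;>
      exact Finset.mem_offDiag.2 ⟨Finset.mem_univ _, Finset.mem_univ _,
        by first | exact ne_of_lt h.2 | exact (ne_of_lt h.2).symm⟩
  have := Finset.card_le_card hsub
  rw [Finset.card_union_of_disjoint hdisj] at this
  rw [Finset.offDiag_card, Finset.card_univ] at this
  omega

lemma alphaF_eq_univ_sum (S : Finset α) (p : α → ℝ) :
    alphaF S p = ∑ q ∈ (univ ×ˢ univ : Finset (α × α)),
      (if q.1 ∈ S ∧ q.2 ∈ S ∧ q.1 ⋖ q.2 then p q.2 - p q.1 else 0) := by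
  rw [alphaF, Finset.sum_product]
  rw [← Finset.sum_subset (Finset.subset_univ S)]
  · refine Finset.sum_congr rfl fun i hi => ?_
    rw [← Finset.sum_subset (Finset.subset_univ S)]
    · refine Finset.sum_congr rfl fun j hj => by simp [hi, hj]
    · intro j _ hj; simp [hj]
  · intro i _ hi
    refine Finset.sum_eq_zero fun j _ => by simp [hi]

lemma alphaF_le_sum {ι : Type*} (U : Finset α) (p : α → ℝ)
    (hmono : ∀ i j : α, i ⋖ j → 0 ≤ p j - p i)
    (I : Finset ι) (g : ι → Finset α) (B : ℝ) (hB : 0 ≤ B)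
    (hextra : ∀ i j : α, i ⋖ j → i ∈ U → j ∈ U →
      (∀ t ∈ I, ¬(i ∈ g t ∧ j ∈ g t)) → p j - p i ≤ B) :
    alphaF U p ≤ (∑ t ∈ I, alphaF (g t) p) +
      (((univ ×ˢ univ : Finset (α × α)).filter (fun q => q.1 < q.2)).card : ℝ) * B := by
  have key : alphaF U p ≤ ∑ q ∈ (univ ×ˢ univ : Finset (α × α)),
      ((∑ t ∈ I, (if q.1 ∈ g t ∧ q.2 ∈ g t ∧ q.1 ⋖ q.2 then p q.2 - p q.1 else 0)) +
        (if q.1 < q.2 then B else 0)) := by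
    rw [alphaF_eq_univ_sum]
    refine Finset.sum_le_sum fun q _ => ?_
    have hnn : ∀ t ∈ I, 0 ≤ (if q.1 ∈ g t ∧ q.2 ∈ g t ∧ q.1 ⋖ q.2 then p q.2 - p q.1 else 0) := by
      intro t _
      split
      · next h => exact hmono _ _ h.2.2
      · exact le_rfl
    have hsum_nn : 0 ≤ ∑ t ∈ I, (if q.1 ∈ g t ∧ q.2 ∈ g t ∧ q.1 ⋖ q.2 then p q.2 - p q.1 else 0) :=
      Finset.sum_nonneg hnn
    have hite_nn : 0 ≤ (if q.1 < q.2 then B else 0) := by positivity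
    split
    · next h =>
      obtain ⟨h1, h2, h3⟩ := h
      by_cases hc : ∃ t ∈ I, q.1 ∈ g t ∧ q.2 ∈ g t
      · obtain ⟨t, ht, ht1, ht2⟩ := hc
        have heq : (p q.2 - p q.1) =
            (if q.1 ∈ g t ∧ q.2 ∈ g t ∧ q.1 ⋖ q.2 then p q.2 - p q.1 else 0) := by
          simp [ht1, ht2, h3]
        have hsing := Finset.single_le_sum hnn ht
        linarith
      · push_neg at hc
        have hlt : q.1 < q.2 := h3.lt
        have := hextra q.1 q.2 h3 h1 h2 (fun t ht => by
          intro ⟨ha, hb⟩; exact absurd hb (hc t ht ha))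
        simp only [hlt, if_true]
        linarith
    · linarith
  rw [Finset.sum_add_distrib] at key
  have e1 : ∑ q ∈ (univ ×ˢ univ : Finset (α × α)),
      (∑ t ∈ I, (if q.1 ∈ g t ∧ q.2 ∈ g t ∧ q.1 ⋖ q.2 then p q.2 - p q.1 else 0)) =
      ∑ t ∈ I, alphaF (g t) p := by
    rw [Finset.sum_comm]
    exact Finset.sum_congr rfl fun t _ => (alphaF_eq_univ_sum (g t) p).symm
  have e2 : ∑ q ∈ (univ ×ˢ univ : Finset (α × α)), (if q.1 < q.2 then B else 0) =
      (((univ ×ˢ univ : Finset (α × α)).filter (fun q => q.1 < q.2)).card : ℝ) * B := by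
    rw [← Finset.sum_filter, Finset.sum_const, nsmul_eq_mul]
  linarith
end Aux

section Aux
attribute [local instance] Classical.propDecidable
set_option linter.unusedSectionVars false
variable {α : Type*} [Fintype α] [PartialOrder α] [DecidableEq α]

lemma chain_interval' {a b : α} (hab : a ≤ b) :
    Relation.ReflTransGen
      (fun x y => (a ≤ x ∧ x ≤ b) ∧ (a ≤ y ∧ y ≤ b) ∧ (x ⋖ y ∨ y ⋖ x)) a b :=
  chain_interval hab

def hasseIn (τ : Finset α) : α → α → Prop :=
  fun x y => x ∈ τ ∧ y ∈ τ ∧ (x ⋖ y ∨ y ⋖ x)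

lemma rtg_symm' {β : Type*} {r : β → β → Prop} (h : Symmetric r) :
    Symmetric (Relation.ReflTransGen r) := fun a b hab => by
  haveI : Std.Symm r := ⟨fun x y hxy => h hxy⟩
  exact Std.Symm.symm a b hab

lemma rtg_mono' {β : Type*} {r p : β → β → Prop} {a b : β} (h : Relation.ReflTransGen r a b)
    (hrp : ∀ x y, r x y → p x y) : Relation.ReflTransGen p a b :=
  Relation.ReflTransGen.mono hrp a b h

lemma hasseIn_symm (τ : Finset α) : Symmetric (hasseIn τ) := by
  intro x y ⟨h1, h2, h3⟩; exact ⟨h2, h1, h3.symm⟩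

lemma mem_convF {S : Finset α} {a b c : α} (ha : a ∈ S) (hc : c ∈ S)
    (h1 : a ≤ b) (h2 : b ≤ c) : b ∈ convF S := by
  rw [convF, Finset.mem_filter]
  exact ⟨Finset.mem_univ _, a, ha, c, hc, h1, h2⟩

lemma subset_convF (S : Finset α) : S ⊆ convF S :=
  fun a ha => mem_convF ha ha le_rfl le_rfl

lemma convF_spec {S : Finset α} {b : α} (hb : b ∈ convF S) :
    ∃ a ∈ S, ∃ c ∈ S, a ≤ b ∧ b ≤ c := by
  rw [convF, Finset.mem_filter] at hb; exact hb.2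

lemma convF_convex (S : Finset α) : IsConvexIn (convF S) := by
  intro a ha c hc b h1 h2
  obtain ⟨a', ha', _, _, h3, _⟩ := convF_spec ha
  obtain ⟨_, _, c', hc', _, h6⟩ := convF_spec hc
  exact mem_convF ha' hc' (h3.trans h1) (h2.trans h6)

lemma reach_convF {S : Finset α} {a u : α} (ha : a ∈ S) (hu : u ∈ convF S) (hau : a ≤ u) :
    Relation.ReflTransGen (hasseIn (convF S)) a u := by
  obtain ⟨_, _, c, hc, _, huc⟩ := convF_spec hu
  refine rtg_mono' (chain_interval' hau) fun x y hxy => ?_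
  obtain ⟨⟨hx1, hx2⟩, ⟨hy1, hy2⟩, hcov⟩ := hxy
  exact ⟨mem_convF ha hc hx1 (hx2.trans huc), mem_convF ha hc hy1 (hy2.trans huc), hcov⟩

lemma convF_connected {S : Finset α}
    (h : ∀ x ∈ S, ∀ y ∈ S, Relation.ReflTransGen (hasseIn (convF S)) x y) :
    IsConnectedIn (convF S) := by
  intro u hu v hv
  obtain ⟨au, hau, _, _, h1, _⟩ := convF_spec hu
  obtain ⟨av, hav, _, _, h2, _⟩ := convF_spec hv
  have r1 := reach_convF hau hu h1
  have r2 := reach_convF hav hv h2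
  have r3 := h au hau av hav
  have symmR : Symmetric (Relation.ReflTransGen (hasseIn (convF S))) :=
    rtg_symm' (hasseIn_symm _)
  exact (symmR r1).trans (r3.trans r2)

lemma pair_cover_tube (hn : 3 ≤ Fintype.card α) {i j : α} (hij : i ⋖ j) :
    IsProperTube ({i, j} : Finset α) := by
  have hne : i ≠ j := hij.lt.ne
  have hcard : ({i, j} : Finset α).card = 2 := Finset.card_pair hne
  refine ⟨⟨?_, ?_, by omega⟩, by omega⟩
  · intro a ha b hb
    have hmemi : i ∈ ({i, j} : Finset α) := by simp
    have hmemj : j ∈ ({i, j} : Finset α) := by simp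
    have step : Relation.ReflTransGen
        (fun x y => x ∈ ({i, j} : Finset α) ∧ y ∈ ({i, j} : Finset α) ∧ (x ⋖ y ∨ y ⋖ x)) i j :=
      Relation.ReflTransGen.single ⟨hmemi, hmemj, Or.inl hij⟩
    have symmR := rtg_symm'
      (hasseIn_symm ({i, j} : Finset α))
    simp only [Finset.mem_insert, Finset.mem_singleton] at ha hb
    rcases ha with rfl | rfl <;> rcases hb with rfl | rfl
    · exact Relation.ReflTransGen.refl
    · exact step
    · exact symmR step
    · exact Relation.ReflTransGen.refl
  · intro a ha c hc b h1 h2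
    simp only [Finset.mem_insert, Finset.mem_singleton] at ha hc ⊢
    rcases ha with rfl | rfl <;> rcases hc with rfl | rfl
    · exact Or.inl (le_antisymm h2 h1)
    · exact hij.eq_or_eq h1 h2
    · exact absurd (h1.trans h2) hij.lt.not_ge
    · exact Or.inr (le_antisymm h2 h1)

lemma alphaF_pair {i j : α} (hij : i ⋖ j) (p : α → ℝ) :
    alphaF ({i, j} : Finset α) p = p j - p i := by
  have hne : i ≠ j := hij.lt.ne
  have h1 : ¬ i ⋖ i := fun h => absurd h.lt (lt_irrefl _)
  have h2 : ¬ j ⋖ j := fun h => absurd h.lt (lt_irrefl _)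
  have h3 : ¬ j ⋖ i := fun h => absurd h.lt (asymm hij.lt)
  rw [alphaF]
  rw [Finset.sum_pair hne, Finset.sum_pair hne, Finset.sum_pair hne]
  simp [h1, h2, h3, hij]
end Aux



section Main
attribute [local instance] Classical.propDecidable
set_option linter.unusedSectionVars false
set_option linter.unusedVariables false
variable {α : Type*} [Fintype α] [PartialOrder α] [DecidableEq α]

private lemma cycle_numeric {X D aU lR P2 Nl : ℝ}
    (hX3 : 3 ≤ X) (hD0 : 0 < D) (hNl : 0 ≤ Nl) (hNltR : 2 * Nl ≤ X * X - X)
    (hDle : D ≤ lR * P2) (hlX : 2 * lR ≤ X) (hP2 : 0 < P2)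
    (he4 : aU ≤ D + Nl * (4 * D)) : aU < P2 * (X * X * (X * X)) := by
  have hl0 : 0 ≤ lR := by nlinarith
  have e5 : aU ≤ D * (1 + 2 * (X * X - X)) := by nlinarith
  have e6 : D * (1 + 2 * (X * X - X)) ≤ D * (2 * (X * X)) := by nlinarith
  have e7 : D * (2 * (X * X)) ≤ lR * P2 * (2 * (X * X)) := by nlinarith
  have e8 : lR * P2 * (2 * (X * X)) ≤ P2 * (X * (X * X)) := by
    have h := mul_le_mul_of_nonneg_right hlX
      (by nlinarith : (0 : ℝ) ≤ P2 * (X * X))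
    nlinarith [h]
  have e9 : P2 * (X * (X * X)) < P2 * (X * X * (X * X)) := by nlinarith
  linarith

lemma tube_lb (p : α → ℝ)
    (hp2 : alphaF Finset.univ p = (Fintype.card α : ℝ) ^ (2 * Fintype.card α))
    (hp3 : ∀ σ : Finset α, IsProperTube σ →
      (Fintype.card α : ℝ) ^ (2 * σ.card) ≤ alphaF σ p)
    (U : Finset α) (hU : IsTube U) :
    (Fintype.card α : ℝ) ^ (2 * U.card) ≤ alphaF U p := by
  by_cases h : U.card ≤ Fintype.card α - 1
  · exact hp3 U ⟨hU, h⟩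
  · have hle : U.card ≤ Fintype.card α := by
      simpa using Finset.card_le_card (Finset.subset_univ U)
    have hcard : U.card = Fintype.card α := by omega
    have : U = Finset.univ := Finset.eq_univ_of_card U hcard
    rw [this, Finset.card_univ, hp2]

lemma crossing_case (p : α → ℝ) (hn3 : 3 ≤ Fintype.card α)
    (hp2 : alphaF Finset.univ p = (Fintype.card α : ℝ) ^ (2 * Fintype.card α))
    (hp3 : ∀ σ : Finset α, IsProperTube σ →
      (Fintype.card α : ℝ) ^ (2 * σ.card) ≤ alphaF σ p)
    (hmono : ∀ i j : α, i ⋖ j → 0 ≤ p j - p i)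
    (hle : ∀ a b : α, a ≤ b → p a ≤ p b)
    (σ τ : Finset α) (hσ : IsProperTube σ) (hτ : IsProperTube τ)
    (hσα : alphaF σ p = (Fintype.card α : ℝ) ^ (2 * σ.card))
    (hτα : alphaF τ p = (Fintype.card α : ℝ) ^ (2 * τ.card))
    (z : α) (hzσ : z ∈ σ) (hzτ : z ∈ τ)
    (hns : ¬ σ ⊆ τ) (hnt : ¬ τ ⊆ σ) : False := by
  set n := Fintype.card α with hn
  set X : ℝ := (n : ℝ) with hX
  have hX3 : (3 : ℝ) ≤ X := by rw [hX, hn]; exact_mod_cast hn3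
  have hX1 : (1 : ℝ) ≤ X := by linarith
  have hX0 : (0 : ℝ) < X := by linarith
  set U := convF (σ ∪ τ) with hU
  have hσU : σ ⊆ U := fun x hx => subset_convF _ (Finset.mem_union_left _ hx)
  have hτU : τ ⊆ U := fun x hx => subset_convF _ (Finset.mem_union_right _ hx)
  -- connectivity
  have hconnU : IsConnectedIn U := by
    refine convF_connected fun x hx y hy => ?_
    have key : ∀ w ∈ σ ∪ τ, Relation.ReflTransGen (hasseIn U) w z := by
      intro w hw
      rcases Finset.mem_union.1 hw with hw | hw
      · exact rtg_mono' (hσ.1.1 w hw z hzσ) fun x y ⟨h1, h2, h3⟩ => ⟨hσU h1, hσU h2, h3⟩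
      · exact rtg_mono' (hτ.1.1 w hw z hzτ) fun x y ⟨h1, h2, h3⟩ => ⟨hτU h1, hτU h2, h3⟩
    have symmR := rtg_symm' (hasseIn_symm U)
    exact (key x hx).trans (symmR (key y hy))
  -- cards
  obtain ⟨u, huτ, huσ⟩ := Finset.not_subset.1 hnt
  obtain ⟨v, hvσ, hvτ⟩ := Finset.not_subset.1 hns
  have hcardσ : σ.card + 1 ≤ U.card := by
    have : insert u σ ⊆ U := by
      intro x hx
      rcases Finset.mem_insert.1 hx with rfl | hx
      · exact hτU huτ
      · exact hσU hx
    have := Finset.card_le_card this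
    rwa [Finset.card_insert_of_notMem huσ] at this
  have hcardτ : τ.card + 1 ≤ U.card := by
    have : insert v τ ⊆ U := by
      intro x hx
      rcases Finset.mem_insert.1 hx with rfl | hx
      · exact hσU hvσ
      · exact hτU hx
    have := Finset.card_le_card this
    rwa [Finset.card_insert_of_notMem hvτ] at this
  have hUtube : IsTube U := ⟨hconnU, convF_convex _, by
    have := hσ.1.2.2; omega⟩
  have hLB := tube_lb p hp2 hp3 U hUtube
  set m := max σ.card τ.card with hm
  -- diam facts
  have hdiamσ : ∀ x ∈ σ, |p x - p z| ≤ X ^ (2 * σ.card) := by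
    intro x hx
    rw [← hσα]
    exact abs_sub_le_alphaF p hmono σ (hσ.1.1 x hx z hzσ)
  have hdiamτ : ∀ x ∈ τ, |p x - p z| ≤ X ^ (2 * τ.card) := by
    intro x hx
    rw [← hτα]
    exact abs_sub_le_alphaF p hmono τ (hτ.1.1 x hx z hzτ)
  have hpowm : ∀ S' : Finset α, S' = σ ∨ S' = τ → X ^ (2 * S'.card) ≤ X ^ (2 * m) := by
    intro S' hS'
    apply pow_le_pow_right₀ hX1
    rcases hS' with rfl | rfl
    · omega
    · omega
  have hdiam : ∀ x ∈ σ ∪ τ, |p x - p z| ≤ X ^ (2 * m) := by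
    intro x hx
    rcases Finset.mem_union.1 hx with hx | hx
    · exact (hdiamσ x hx).trans (hpowm σ (Or.inl rfl))
    · exact (hdiamτ x hx).trans (hpowm τ (Or.inr rfl))
  -- extra bound
  have hextra : ∀ i j : α, i ⋖ j → i ∈ U → j ∈ U → p j - p i ≤ 2 * X ^ (2 * m) := by
    intro i j hij hiU hjU
    obtain ⟨a, ha, _, _, hai, _⟩ := convF_spec hiU
    obtain ⟨_, _, c, hc, _, hjc⟩ := convF_spec hjU
    have h1 : p a ≤ p i := hle _ _ hai
    have h2 : p j ≤ p c := hle _ _ hjc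
    have h3 := hdiam a ha
    have h4 := hdiam c hc
    rw [abs_le] at h3 h4
    linarith [h3.1, h4.2]
  -- sum bound
  have hστ : σ ≠ τ := fun h => hns (h ▸ Finset.Subset.refl σ)
  have hsum := alphaF_le_sum U p hmono ({σ, τ} : Finset (Finset α)) id
    (2 * X ^ (2 * m)) (by positivity)
    (fun i j hij hiU hjU _ => hextra i j hij hiU hjU)
  rw [Finset.sum_pair hστ] at hsum
  simp only [id] at hsum
  -- numeric
  set Nlt := ((Finset.univ ×ˢ Finset.univ : Finset (α × α)).filter
    (fun q => q.1 < q.2)).card with hNlt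
  have hNltR : 2 * (Nlt : ℝ) ≤ X * X - X := by
    have h := lt_pairs_card (α := α)
    have hle' : n ≤ n * n := Nat.le_mul_of_pos_left n (by omega)
    have : (2 * Nlt : ℕ) ≤ n * n - n := h
    have hcast : ((n * n - n : ℕ) : ℝ) = X * X - X := by
      push_cast [Nat.cast_sub hle']; ring
    calc (2 : ℝ) * Nlt = ((2 * Nlt : ℕ) : ℝ) := by push_cast; ring
      _ ≤ ((n * n - n : ℕ) : ℝ) := by exact_mod_cast this
      _ = X * X - X := hcast
  have hm1 : 2 * (m + 1) ≤ 2 * U.card := by omega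
  have hpowU : X ^ (2 * (m + 1)) ≤ X ^ (2 * U.card) := pow_le_pow_right₀ hX1 hm1
  have hpm0 : (0 : ℝ) < X ^ (2 * m) := by positivity
  have hfinal : alphaF U p < X ^ (2 * (m + 1)) := by
    have e1 : X ^ (2 * σ.card) ≤ X ^ (2 * m) := hpowm σ (Or.inl rfl)
    have e2 : X ^ (2 * τ.card) ≤ X ^ (2 * m) := hpowm τ (Or.inr rfl)
    have e3 : X ^ (2 * (m + 1)) = X ^ (2 * m) * (X * X) := by
      rw [mul_add, pow_add]; ring
    have e4 : alphaF U p ≤ X ^ (2 * m) + X ^ (2 * m) + (Nlt : ℝ) * (2 * X ^ (2 * m)) := by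
      rw [hσα, hτα] at hsum
      linarith
    have e5 : (Nlt : ℝ) * (2 * X ^ (2 * m)) ≤ (X * X - X) * X ^ (2 * m) := by
      have := hNltR
      nlinarith
    rw [e3]
    nlinarith
  linarith

lemma cycle_case (p : α → ℝ) (hn3 : 3 ≤ Fintype.card α)
    (hp2 : alphaF Finset.univ p = (Fintype.card α : ℝ) ^ (2 * Fintype.card α))
    (hp3 : ∀ σ : Finset α, IsProperTube σ →
      (Fintype.card α : ℝ) ^ (2 * σ.card) ≤ alphaF σ p)
    (hmono : ∀ i j : α, i ⋖ j → 0 ≤ p j - p i)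
    (hle : ∀ a b : α, a ≤ b → p a ≤ p b)
    (l : ℕ) (hl : 2 ≤ l) (g : ℕ → Finset α)
    (htube : ∀ t < l, IsProperTube (g t))
    (hα : ∀ t < l, alphaF (g t) p = (Fintype.card α : ℝ) ^ (2 * (g t).card))
    (hdisj : ∀ s < l, ∀ t < l, s ≠ t → ∀ x ∈ g s, x ∉ g t)
    (hlink : ∀ t < l, ∃ a ∈ g t, ∃ b ∈ g ((t + 1) % l), a < b) : False := by
  set n := Fintype.card α with hn
  set X : ℝ := (n : ℝ) with hX
  have hX3 : (3 : ℝ) ≤ X := by rw [hX, hn]; exact_mod_cast hn3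
  have hX1 : (1 : ℝ) ≤ X := by linarith
  have hX0 : (0 : ℝ) < X := by linarith
  have hl0 : 0 < l := by omega
  have hne : Nonempty α := Fintype.card_pos_iff.mp (by omega)
  choose! a' ha' b' hb' hab' using hlink
  set A : ℕ → α := fun t => a' (t % l) with hA
  set B : ℕ → α := fun t => b' (t % l) with hB
  have hmodlt : ∀ t : ℕ, t % l < l := fun t => Nat.mod_lt t hl0
  have hmodsucc : ∀ t : ℕ, (t % l + 1) % l = (t + 1) % l := fun t =>
    (Nat.mod_modEq t l).add_right 1
  have hAmem : ∀ t : ℕ, A t ∈ g (t % l) := fun t => ha' _ (hmodlt t)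
  have hBmem : ∀ t : ℕ, B t ∈ g ((t + 1) % l) := by
    intro t
    have := hb' _ (hmodlt t)
    rwa [hmodsucc t] at this
  have hABlt : ∀ t : ℕ, A t < B t := fun t => hab' _ (hmodlt t)
  set d : ℕ → ℝ := fun t => X ^ (2 * (g (t % l)).card) with hd
  set D : ℝ := ∑ t ∈ Finset.range l, X ^ (2 * (g t).card) with hD
  have hd0 : ∀ t, 0 < d t := fun t => by positivity
  have hdD : ∀ t, d t ≤ D := by
    intro t
    rw [hD]
    have : d t = (fun s => X ^ (2 * (g s).card)) (t % l) := rfl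
    rw [this]
    exact Finset.single_le_sum (f := fun s => X ^ (2 * (g s).card))
      (fun s _ => by positivity) (Finset.mem_range.2 (hmodlt t))
  have hD0 : 0 < D := lt_of_lt_of_le (hd0 0) (hdD 0)
  -- within-tube diameter
  have hdiam : ∀ t : ℕ, ∀ x ∈ g (t % l), ∀ y ∈ g (t % l), |p x - p y| ≤ d t := by
    intro t x hx y hy
    have := hα _ (hmodlt t)
    rw [hd]
    dsimp only
    rw [← this]
    exact abs_sub_le_alphaF p hmono _ ((htube _ (hmodlt t)).1.1 x hx y hy)
  -- step
  have hstep : ∀ t : ℕ, p (A t) ≤ p (A (t + 1)) + d (t + 1) := by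
    intro t
    have h1 : p (A t) ≤ p (B t) := hle _ _ (hABlt t).le
    have h2 : |p (B t) - p (A (t + 1))| ≤ d (t + 1) := by
      have hBt : B t ∈ g ((t + 1) % l) := hBmem t
      have hAt : A (t + 1) ∈ g ((t + 1) % l) := hAmem (t + 1)
      exact hdiam (t + 1) _ hBt _ hAt
    rw [abs_le] at h2
    linarith [h2.1, h2.2]
  -- telescoping
  have htel : ∀ t s : ℕ, p (A t) ≤ p (A (t + s)) + ∑ u ∈ Finset.Ico (t + 1) (t + s + 1), d u := by
    intro t s
    induction s with
    | zero => simp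
    | succ s ih =>
      have hstep' := hstep (t + s)
      have hsum : ∑ u ∈ Finset.Ico (t + 1) (t + s + 1 + 1), d u =
          (∑ u ∈ Finset.Ico (t + 1) (t + s + 1), d u) + d (t + s + 1) := by
        rw [Finset.sum_Ico_succ_top (by omega)]
      rw [show t + (s + 1) = t + s + 1 by omega, hsum]
      linarith
  -- window bound
  have hwin : ∀ t s : ℕ, s ≤ l → ∑ u ∈ Finset.Ico (t + 1) (t + s + 1), d u ≤ D := by
    intro t s hs
    have hinj : Set.InjOn (· % l) (Finset.Ico (t + 1) (t + s + 1)) := by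
      intro u hu v hv huv
      simp only [Finset.coe_Ico, Set.mem_Ico] at hu hv
      rcases le_total u v with h | h
      · have hdvd : l ∣ v - u := (Nat.modEq_iff_dvd' h).1 huv
        rcases Nat.eq_zero_or_pos (v - u) with h0 | h0
        · omega
        · have := Nat.le_of_dvd h0 hdvd; omega
      · have hdvd : l ∣ u - v := (Nat.modEq_iff_dvd' h).1 huv.symm
        rcases Nat.eq_zero_or_pos (u - v) with h0 | h0
        · omega
        · have := Nat.le_of_dvd h0 hdvd; omega
    have e1 : ∑ u ∈ Finset.Ico (t + 1) (t + s + 1), d u =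
        ∑ u ∈ (Finset.Ico (t + 1) (t + s + 1)).image (· % l), X ^ (2 * (g u).card) := by
      rw [Finset.sum_image (fun u hu v hv h => hinj hu hv h)]
    rw [e1, hD]
    refine Finset.sum_le_sum_of_subset_of_nonneg ?_ (fun u _ _ => by positivity)
    intro u hu
    obtain ⟨v, _, rfl⟩ := Finset.mem_image.1 hu
    exact Finset.mem_range.2 (hmodlt v)
  -- crux
  have hcrux : ∀ i j : ℕ, i < l → j < l → p (a' i) ≤ p (a' j) + D := by
    intro i j hi hj
    set s : ℕ := if i ≤ j then j - i else j + l - i with hs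
    have hsl : s ≤ l := by rw [hs]; split <;> omega
    have hmod : (i + s) % l = j := by
      rw [hs]
      split
      · next h => rw [show i + (j - i) = j by omega]; exact Nat.mod_eq_of_lt hj
      · next h =>
        rw [show i + (j + l - i) = j + l by omega, Nat.add_mod_right]
        exact Nat.mod_eq_of_lt hj
    have := (htel i s).trans (by linarith [hwin i s hsl] : p (A (i + s)) + ∑ u ∈ Finset.Ico (i + 1) (i + s + 1), d u ≤ p (A (i + s)) + D)
    have hAi : A i = a' i := by rw [hA]; simp [Nat.mod_eq_of_lt hi]
    have hAis : A (i + s) = a' j := by rw [hA]; simp [hmod]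
    rw [hAi, hAis] at this
    exact this
  -- the union and its hull
  set S : Finset α := (Finset.range l).biUnion g with hS
  set U : Finset α := convF S with hU
  have hgU : ∀ t < l, g t ⊆ U := by
    intro t ht x hx
    exact subset_convF _ (Finset.mem_biUnion.2 ⟨t, Finset.mem_range.2 ht, hx⟩)
  -- spread
  have hspread : ∀ u ∈ U, |p u - p (a' 0)| ≤ 2 * D := by
    intro u hu
    obtain ⟨x, hxS, c, hcS, hxu, huc⟩ := convF_spec hu
    obtain ⟨tx, htx, hxg⟩ := Finset.mem_biUnion.1 hxS
    obtain ⟨tc, htc, hcg⟩ := Finset.mem_biUnion.1 hcS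
    rw [Finset.mem_range] at htx htc
    have hx1 : |p x - p (a' tx)| ≤ d tx := by
      have h := hdiam tx
      rw [Nat.mod_eq_of_lt htx] at h
      exact h x hxg (a' tx) (ha' tx htx)
    have hc1 : |p c - p (a' tc)| ≤ d tc := by
      have h := hdiam tc
      rw [Nat.mod_eq_of_lt htc] at h
      exact h c hcg (a' tc) (ha' tc htc)
    have h2 : p (a' tx) ≤ p (a' 0) + D := hcrux tx 0 htx hl0
    have h3 : p (a' tc) ≤ p (a' 0) + D := hcrux tc 0 htc hl0
    have h4 : p (a' 0) ≤ p (a' tx) + D := hcrux 0 tx hl0 htx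
    have h5 : p (a' 0) ≤ p (a' tc) + D := hcrux 0 tc hl0 htc
    have h6 : p x ≤ p u := hle _ _ hxu
    have h7 : p u ≤ p c := hle _ _ huc
    have hdtx : d tx ≤ D := hdD tx
    have hdtc : d tc ≤ D := hdD tc
    rw [abs_le] at hx1 hc1 ⊢
    constructor <;> nlinarith [hx1.1, hx1.2, hc1.1, hc1.2]
  -- connectivity
  have hconnU : IsConnectedIn U := by
    rw [hU]
    refine convF_connected ?_
    have hwithin : ∀ t < l, ∀ x ∈ g t, ∀ y ∈ g t,
        Relation.ReflTransGen (hasseIn (convF S)) x y := by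
      intro t ht x hx y hy
      exact rtg_mono' ((htube t ht).1.1 x hx y hy) fun x y ⟨h1, h2, h3⟩ =>
        ⟨hgU t ht h1, hgU t ht h2, h3⟩
    have hlinkR : ∀ t < l, Relation.ReflTransGen (hasseIn (convF S)) (a' t) (b' t) := by
      intro t ht
      have h1 : a' t ∈ S := Finset.mem_biUnion.2 ⟨t, Finset.mem_range.2 ht, ha' t ht⟩
      have h2 : b' t ∈ S := Finset.mem_biUnion.2 ⟨(t + 1) % l, Finset.mem_range.2 (hmodlt (t + 1)),
        hb' t ht⟩
      refine rtg_mono' (chain_interval' (hab' t ht).le) fun x y hxy => ?_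
      obtain ⟨⟨hx1, hx2⟩, ⟨hy1, hy2⟩, hcov⟩ := hxy
      exact ⟨mem_convF h1 h2 hx1 hx2, mem_convF h1 h2 hy1 hy2, hcov⟩
    have hA0 : ∀ t < l, Relation.ReflTransGen (hasseIn (convF S)) (a' 0) (a' t) := by
      intro t
      induction t with
      | zero => intro _; exact Relation.ReflTransGen.refl
      | succ t ih =>
        intro ht
        have htl : t < l := by omega
        have r1 := ih htl
        have r2 := hlinkR t htl
        have hbt : b' t ∈ g (t + 1) := by
          have := hb' t htl
          rwa [Nat.mod_eq_of_lt ht] at this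
        have r3 := hwithin (t + 1) ht (b' t) hbt (a' (t + 1)) (ha' (t + 1) ht)
        exact (r1.trans r2).trans r3
    intro x hx y hy
    obtain ⟨tx, htx, hxg⟩ := Finset.mem_biUnion.1 hx
    obtain ⟨ty, hty, hyg⟩ := Finset.mem_biUnion.1 hy
    rw [Finset.mem_range] at htx hty
    have symmR := rtg_symm' (hasseIn_symm (convF S))
    have r1 := hwithin tx htx x hxg (a' tx) (ha' tx htx)
    have r2 := hA0 tx htx
    have r3 := hA0 ty hty
    have r4 := hwithin ty hty (a' ty) (ha' ty hty) y hyg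
    exact ((r1.trans (symmR r2)).trans r3).trans r4
  -- cards
  have hdisj' : ∀ s ∈ Finset.range l, ∀ t ∈ Finset.range l, s ≠ t → Disjoint (g s) (g t) := by
    intro s hs t ht hst
    rw [Finset.mem_range] at hs ht
    exact Finset.disjoint_left.2 fun x hx => hdisj s hs t ht hst x hx
  have hScard : S.card = ∑ t ∈ Finset.range l, (g t).card := Finset.card_biUnion hdisj'
  have hSn : S.card ≤ n := by
    rw [hn]; simpa using Finset.card_le_card (Finset.subset_univ S)
  have h2l : 2 * l ≤ n := by
    have : ∑ t ∈ Finset.range l, 2 ≤ ∑ t ∈ Finset.range l, (g t).card :=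
      Finset.sum_le_sum fun t ht => (htube t (Finset.mem_range.1 ht)).1.2.2
    rw [Finset.sum_const, Finset.card_range, smul_eq_mul] at this
    omega
  obtain ⟨tm, htm, hmax⟩ := Finset.exists_max_image (Finset.range l)
    (fun t => (g t).card) ⟨0, Finset.mem_range.2 hl0⟩
  rw [Finset.mem_range] at htm
  set m := (g tm).card with hm
  have hm2 : 2 ≤ m := (htube tm htm).1.2.2
  set ts := (tm + 1) % l with hts
  have htsl : ts < l := hmodlt _
  have htsne : ts ≠ tm := by
    rw [hts]
    rcases Nat.lt_or_ge (tm + 1) l with h | h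
    · rw [Nat.mod_eq_of_lt h]; omega
    · have : tm + 1 = l := by omega
      rw [this, Nat.mod_self]; omega
  have hUcard : m + 2 ≤ U.card := by
    have hsubU : g tm ∪ g ts ⊆ U := by
      intro x hx
      rcases Finset.mem_union.1 hx with hx | hx
      · exact hgU tm htm hx
      · exact hgU ts htsl hx
    have hdj : Disjoint (g tm) (g ts) := hdisj' tm (Finset.mem_range.2 htm) ts
      (Finset.mem_range.2 htsl) (Ne.symm htsne)
    have := Finset.card_le_card hsubU
    rw [Finset.card_union_of_disjoint hdj] at this
    have := (htube ts htsl).1.2.2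
    omega
  have hUtube : IsTube U := ⟨hconnU, by rw [hU]; exact convF_convex _, by omega⟩
  have hLB := tube_lb p hp2 hp3 U hUtube
  rw [← hn, ← hX] at hLB
  -- numeric
  have hDle : D ≤ (l : ℝ) * X ^ (2 * m) := by
    rw [hD]
    calc ∑ t ∈ Finset.range l, X ^ (2 * (g t).card)
        ≤ ∑ t ∈ Finset.range l, X ^ (2 * m) := by
          refine Finset.sum_le_sum fun t ht => ?_
          refine pow_le_pow_right₀ hX1 ?_
          have := hmax t ht
          omega
      _ = (l : ℝ) * X ^ (2 * m) := by
          rw [Finset.sum_const, Finset.card_range, nsmul_eq_mul]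
  have hextra : ∀ i j : α, i ⋖ j → i ∈ U → j ∈ U → p j - p i ≤ 4 * D := by
    intro i j hij hiU hjU
    have h1 := hspread i hiU
    have h2 := hspread j hjU
    rw [abs_le] at h1 h2
    linarith [h1.1, h2.2]
  have hsum := alphaF_le_sum U p hmono (Finset.range l) g (4 * D) (by linarith)
    (fun i j hij hiU hjU _ => hextra i j hij hiU hjU)
  have hsumα : ∑ t ∈ Finset.range l, alphaF (g t) p = D := by
    rw [hD]
    exact Finset.sum_congr rfl fun t ht => hα t (Finset.mem_range.1 ht)
  rw [hsumα] at hsum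
  set Nlt := ((Finset.univ ×ˢ Finset.univ : Finset (α × α)).filter
    (fun q => q.1 < q.2)).card with hNlt
  have hNltR : 2 * (Nlt : ℝ) ≤ X * X - X := by
    have h := lt_pairs_card (α := α)
    have hle' : n ≤ n * n := Nat.le_mul_of_pos_left n (by omega)
    have hcast : ((n * n - n : ℕ) : ℝ) = X * X - X := by
      push_cast [Nat.cast_sub hle']; ring
    calc (2 : ℝ) * Nlt = ((2 * Nlt : ℕ) : ℝ) := by push_cast; ring
      _ ≤ ((n * n - n : ℕ) : ℝ) := by exact_mod_cast h
      _ = X * X - X := hcast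
  have hlX : 2 * (l : ℝ) ≤ X := by
    rw [hX, hn]
    calc 2 * (l : ℝ) = ((2 * l : ℕ) : ℝ) := by push_cast; ring
      _ ≤ ((Fintype.card α : ℕ) : ℝ) := by exact_mod_cast h2l
  have hpm0 : (0 : ℝ) < X ^ (2 * m) := by positivity
  clear_value n X D m Nlt
  have hNl0 : (0 : ℝ) ≤ (Nlt : ℝ) := Nat.cast_nonneg _
  have hl0R : (0 : ℝ) ≤ (l : ℝ) := Nat.cast_nonneg _
  have hfinal : alphaF U p < X ^ (2 * m) * (X * X * (X * X)) :=
    cycle_numeric hX3 hD0 hNl0 hNltR hDle hlX hpm0 hsum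
  have e3 : X ^ (2 * (m + 2)) = X ^ (2 * m) * (X * X * (X * X)) := by
    rw [mul_add, pow_add]; ring
  have hmle : 2 * (m + 2) ≤ 2 * U.card := by omega
  have hpow := pow_le_pow_right₀ hX1 hmle
  rw [e3] at hpow
  linarith


lemma transgen_chain {R : Finset α → Finset α → Prop} {x y : Finset α}
    (h : Relation.TransGen R x y) :
    ∃ l : ℕ, 1 ≤ l ∧ ∃ f : ℕ → Finset α, f 0 = x ∧ f l = y ∧
      ∀ t < l, R (f t) (f (t + 1)) := by
  induction h with
  | @single b h =>
    refine ⟨1, le_rfl, fun t => if t = 0 then x else b, by simp, by simp, ?_⟩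
    intro t ht
    have ht0 : t = 0 := by omega
    subst ht0
    simpa using h
  | @tail b c hxb hbc ih =>
    obtain ⟨l, hl, f, hf0, hfl, hstep⟩ := ih
    refine ⟨l + 1, by omega, fun t => if t ≤ l then f t else c, by simp [hf0], by simp, ?_⟩
    intro t ht
    by_cases h1 : t + 1 ≤ l
    · simp only [show t ≤ l by omega, if_true, h1, if_true]
      exact hstep t (by omega)
    · have ht' : t = l := by omega
      show R (if t ≤ l then f t else c) (if t + 1 ≤ l then f (t + 1) else c)
      rw [if_pos (by omega : t ≤ l), if_neg h1, ht', hfl]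
      exact hbc

lemma extract_cycle (p : α → ℝ) (hn3 : 3 ≤ Fintype.card α)
    (hp2 : alphaF Finset.univ p = (Fintype.card α : ℝ) ^ (2 * Fintype.card α))
    (hp3 : ∀ σ : Finset α, IsProperTube σ →
      (Fintype.card α : ℝ) ^ (2 * σ.card) ≤ alphaF σ p)
    (hmono : ∀ i j : α, i ⋖ j → 0 ≤ p j - p i)
    (hle : ∀ a b : α, a ≤ b → p a ≤ p b)
    (T : Finset (Finset α)) (hTt : ∀ τ ∈ T, IsProperTube τ)
    (hτα : ∀ τ ∈ T, alphaF τ p = (Fintype.card α : ℝ) ^ (2 * τ.card)) :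
    ∀ l : ℕ, ∀ g : ℕ → Finset α, 1 ≤ l → g 0 = g l →
    (∀ t, t ≤ l → g t ∈ T) →
    (∀ t, t < l → g t = g (t + 1) ∨ TubingRel T (g t) (g (t + 1))) →
    (∀ s, s ≤ l → ∀ t, t ≤ l → g s = g t ∨ ∀ x ∈ g s, x ∉ g t) →
    (∃ t, t < l ∧ g t ≠ g (t + 1)) → False := by
  intro l
  induction l using Nat.strong_induction_on with
  | _ l IH =>
  intro g hl hclosed hmem hstep hpair hex
  by_cases hdup : ∃ i j, i < j ∧ j ≤ l ∧ ¬(i = 0 ∧ j = l) ∧ g i = g j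
  · obtain ⟨i, j, hij, hjl, hnotfull, hgij⟩ := hdup
    obtain ⟨t₀, ht₀, hne₀⟩ := hex
    by_cases hloc : i ≤ t₀ ∧ t₀ < j
    · -- recurse on the inner loop [i, j]
      have hlen : j - i < l := by omega
      refine IH (j - i) hlen (fun s => g (i + s)) (by omega) ?_ ?_ ?_ ?_ ?_
      · show g (i + 0) = g (i + (j - i))
        rw [show i + (j - i) = j by omega, show i + 0 = i by omega, ← hgij]
      · intro t ht; exact hmem (i + t) (by omega)
      · intro t ht
        show g (i + t) = g (i + (t + 1)) ∨ TubingRel T (g (i + t)) (g (i + (t + 1)))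
        rw [show i + (t + 1) = i + t + 1 by omega]
        exact hstep (i + t) (by omega)
      · intro s hs t ht; exact hpair (i + s) (by omega) (i + t) (by omega)
      · refine ⟨t₀ - i, by omega, ?_⟩
        show g (i + (t₀ - i)) ≠ g (i + (t₀ - i + 1))
        rw [show i + (t₀ - i) = t₀ by omega, show i + (t₀ - i + 1) = t₀ + 1 by omega]
        exact hne₀
    · -- recurse cutting out the loop
      set l' := l - (j - i) with hl'
      have hl'1 : 1 ≤ l' := by
        rw [hl']
        rcases Nat.lt_or_ge (j - i) l with h | h
        · omega
        · exfalso; have : i = 0 ∧ j = l := by omega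
          exact hnotfull this
      have hl'l : l' < l := by omega
      set g'' : ℕ → Finset α := fun s => if s < i then g s else g (s + (j - i)) with hg''
      have hval_lt : ∀ s, s < i → g'' s = g s := by
        intro s hs; rw [hg'']; simp [hs]
      have hval_ge : ∀ s, i ≤ s → g'' s = g (s + (j - i)) := by
        intro s hs; rw [hg'']; simp [Nat.not_lt.2 hs]
      have hval_i : ∀ s, s ≤ i → g'' s = g s := by
        intro s hs
        rcases Nat.lt_or_ge s i with h | h
        · exact hval_lt s h
        · have hsi : s = i := by omega
          rw [hval_ge s h, show s + (j - i) = j by omega, ← hgij, hsi]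
      refine IH l' hl'l g'' hl'1 ?_ ?_ ?_ ?_ ?_
      · have h0 : g'' 0 = g 0 := hval_i 0 (by omega)
        have hli : i ≤ l' := by omega
        have hl2 : g'' l' = g l := by
          rw [hval_ge l' hli, show l' + (j - i) = l by omega]
        rw [h0, hl2]; exact hclosed
      · intro t ht
        rcases Nat.lt_or_ge t i with h | h
        · rw [hval_lt t h]; exact hmem t (by omega)
        · rw [hval_ge t h]; exact hmem (t + (j - i)) (by omega)
      · intro t ht
        rcases Nat.lt_or_ge (t + 1) i with h | h
        · rw [hval_lt t (by omega), hval_lt (t + 1) h]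
          exact hstep t (by omega)
        · rcases Nat.lt_or_ge t i with h2 | h2
          · -- t + 1 = i
            have : t + 1 = i := by omega
            rw [hval_lt t h2, hval_i (t + 1) (by omega)]
            exact hstep t (by omega)
          · rw [hval_ge t h2, hval_ge (t + 1) (by omega),
              show t + 1 + (j - i) = t + (j - i) + 1 by omega]
            exact hstep (t + (j - i)) (by omega)
      · intro s hs t ht
        have key : ∀ u, u ≤ l' → ∃ v, v ≤ l ∧ g'' u = g v := by
          intro u hu
          rcases Nat.lt_or_ge u i with h | h
          · exact ⟨u, by omega, hval_lt u h⟩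
          · exact ⟨u + (j - i), by omega, hval_ge u h⟩
        obtain ⟨vs, hvs, hes⟩ := key s hs
        obtain ⟨vt, hvt, het⟩ := key t ht
        rw [hes, het]
        exact hpair vs hvs vt hvt
      · rcases Nat.lt_or_ge t₀ i with h | h
        · refine ⟨t₀, by omega, ?_⟩
          rw [hval_lt t₀ h, hval_i (t₀ + 1) (by omega)]
          exact hne₀
        · have hjt : j ≤ t₀ := by omega
          refine ⟨t₀ - (j - i), by omega, ?_⟩
          rw [hval_ge (t₀ - (j - i)) (by omega), hval_ge (t₀ - (j - i) + 1) (by omega),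
            show t₀ - (j - i) + (j - i) = t₀ by omega,
            show t₀ - (j - i) + 1 + (j - i) = t₀ + 1 by omega]
          exact hne₀
  · -- no nontrivial repetition: a genuine simple cycle
    push_neg at hdup
    rcases Nat.lt_or_ge l 2 with hl2 | hl2
    · -- l = 1
      obtain ⟨t₀, ht₀, hne₀⟩ := hex
      have : t₀ = 0 := by omega
      subst this
      have : l = 1 := by omega
      rw [this] at hclosed
      exact hne₀ (by rw [← hclosed])
    · have hRstep : ∀ t, t < l → TubingRel T (g t) (g (t + 1)) := by
        intro t ht
        rcases hstep t ht with h | h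
        · exfalso
          exact hdup t (t + 1) (by omega) (by omega) (by omega) h
        · exact h
      have hdistinct : ∀ s, s < l → ∀ t, t < l → s ≠ t → g s ≠ g t := by
        intro s hs t ht hst
        rcases Nat.lt_or_ge s t with h | h
        · exact hdup s t h (by omega) (by omega)
        · intro he
          exact hdup t s (by omega) (by omega) (by omega) he.symm
      refine cycle_case p hn3 hp2 hp3 hmono hle l hl2 g
        (fun t ht => hTt _ (hmem t (by omega)))
        (fun t ht => hτα _ (hmem t (by omega)))
        (fun s hs t ht hst => ?_) (fun t ht => ?_)
      · rcases hpair s (by omega) t (by omega) with h | h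
        · exact absurd h (hdistinct s hs t ht hst)
        · exact h
      · rcases Nat.lt_or_ge (t + 1) l with h | h
        · have := hRstep t ht
          rw [Nat.mod_eq_of_lt h]
          exact this.2.2.2
        · have := hRstep t ht
          have h2 : t + 1 = l := by omega
          rw [h2, Nat.mod_self]
          rw [h2, ← hclosed] at this
          exact this.2.2.2

end Main

/-- if a collection `T` of proper tubes is not a proper tubing,
then `⋂_{τ ∈ T} H_τ ∩ 𝒜(P) = ∅`. -/
theorem incompatible_lemma {α : Type*} [Fintype α] [PartialOrder α] [DecidableEq α]
    (hconn : IsConnectedIn (Finset.univ : Finset α)) (hn : 2 ≤ Fintype.card α)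
    (T : Finset (Finset α)) (hTt : ∀ τ ∈ T, IsProperTube τ)
    (hnot : ¬ IsProperTubing T) :
    ¬ ∃ p : α → ℝ, (∑ i, p i = 0) ∧
      alphaF Finset.univ p = (Fintype.card α : ℝ) ^ (2 * Fintype.card α) ∧
      (∀ σ : Finset α, IsProperTube σ →
        (Fintype.card α : ℝ) ^ (2 * σ.card) ≤ alphaF σ p) ∧
      ∀ τ ∈ T, alphaF τ p = (Fintype.card α : ℝ) ^ (2 * τ.card) := by
  classical
  rintro ⟨p, hp1, hp2, hp3, hp4⟩
  rcases Finset.eq_empty_or_nonempty T with rfl | ⟨τ0, hτ0⟩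
  · exact hnot ⟨fun τ h => absurd h (Finset.notMem_empty τ),
      fun σ h => absurd h (Finset.notMem_empty σ),
      fun τ h => absurd h (Finset.notMem_empty τ)⟩
  have hn3 : 3 ≤ Fintype.card α := by
    have h1 := (hTt τ0 hτ0).1.2.2
    have h2 := (hTt τ0 hτ0).2
    omega
  have hcov : ∀ i j : α, i ⋖ j → (Fintype.card α : ℝ) ^ 4 ≤ p j - p i := by
    intro i j hij
    have h := hp3 _ (pair_cover_tube hn3 hij)
    rw [alphaF_pair hij] at h
    have hc2 : ({i, j} : Finset α).card = 2 := Finset.card_pair hij.lt.ne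
    rw [hc2] at h
    simpa using h
  have hC0 : (0 : ℝ) ≤ (Fintype.card α : ℝ) ^ 4 := by positivity
  have hmono : ∀ i j : α, i ⋖ j → 0 ≤ p j - p i :=
    fun i j h => le_trans hC0 (hcov i j h)
  have hle : ∀ a b : α, a ≤ b → p a ≤ p b :=
    fun a b h => mono_of_cov p _ hC0 hcov h
  rw [IsProperTubing] at hnot
  push_neg at hnot
  by_cases hB : ∀ σ ∈ T, ∀ τ ∈ T, σ ⊆ τ ∨ τ ⊆ σ ∨ ∀ x ∈ σ, x ∉ τ
  · -- cycle case
    obtain ⟨τ, hτT, htrans⟩ := hnot hTt hB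
    obtain ⟨l, hl, f, hf0, hfl, hstep⟩ := transgen_chain htrans
    set T2 := (Finset.range (l + 1)).image f with hT2
    have hfT2 : ∀ t, t ≤ l → f t ∈ T2 :=
      fun t ht => Finset.mem_image.2 ⟨t, Finset.mem_range.2 (by omega), rfl⟩
    have hmemT2 : ∀ ρ ∈ T2, ρ ∈ T := by
      intro ρ hρ
      obtain ⟨t, ht, rfl⟩ := Finset.mem_image.1 hρ
      rw [Finset.mem_range] at ht
      rcases Nat.lt_or_ge t l with h | h
      · exact (hstep t h).1
      · have : t = l := by omega
        rw [this, hfl]; exact hτT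
    have hhat : ∀ ρ ∈ T2, ∃ χ ∈ T2, ρ ⊆ χ ∧ ∀ χ' ∈ T2, χ ⊆ χ' → χ' = χ := by
      intro ρ hρ
      obtain ⟨χ, hχ, hmax⟩ := Finset.exists_max_image (T2.filter (fun χ => ρ ⊆ χ))
        Finset.card ⟨ρ, Finset.mem_filter.2 ⟨hρ, Finset.Subset.refl ρ⟩⟩
      rw [Finset.mem_filter] at hχ
      refine ⟨χ, hχ.1, hχ.2, fun χ' hχ' hsub => ?_⟩
      have hmem' : χ' ∈ T2.filter (fun χ => ρ ⊆ χ) :=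
        Finset.mem_filter.2 ⟨hχ', hχ.2.trans hsub⟩
      exact (Finset.eq_of_subset_of_card_le hsub (hmax χ' hmem')).symm
    choose! H hH1 hH2 hH3 using hhat
    set gH : ℕ → Finset α := fun t => H (f t) with hgH
    have hgmem : ∀ t, t ≤ l → gH t ∈ T :=
      fun t ht => hmemT2 _ (hH1 _ (hfT2 t ht))
    have hpairH : ∀ s, s ≤ l → ∀ t, t ≤ l → gH s = gH t ∨ ∀ x ∈ gH s, x ∉ gH t := by
      intro s hs t ht
      by_cases he : gH s = gH t
      · exact Or.inl he
      · refine Or.inr ?_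
        rcases hB _ (hgmem s hs) _ (hgmem t ht) with h | h | h
        · exfalso
          apply he
          show H (f s) = H (f t)
          exact (hH3 _ (hfT2 s hs) _ (hH1 _ (hfT2 t ht)) h).symm
        · exfalso
          apply he
          show H (f s) = H (f t)
          exact hH3 _ (hfT2 t ht) _ (hH1 _ (hfT2 s hs)) h
        · exact h
    by_cases hall : ∀ t, t ≤ l → gH t = gH 0
    · -- everything inside one hat: direct contradiction
      have h0 : gH 0 ∈ T2 := hH1 _ (hfT2 0 (by omega))
      obtain ⟨s, hsr, heq⟩ := Finset.mem_image.1 h0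
      rw [Finset.mem_range] at hsr
      have hs' : ∃ s' , s' < l ∧ f s' = gH 0 := by
        rcases Nat.lt_or_ge s l with h | h
        · exact ⟨s, h, heq⟩
        · have hsl : s = l := by omega
          refine ⟨0, by omega, ?_⟩
          rw [hf0, ← hfl, ← hsl, heq]
      obtain ⟨s', hs'l, hfs'⟩ := hs'
      obtain ⟨-, -, hdisj, a, ha, b, hb, hab⟩ := hstep s' hs'l
      have hbmem : b ∈ f s' := by
        have h1 : f (s' + 1) ⊆ H (f (s' + 1)) := hH2 _ (hfT2 (s' + 1) (by omega))
        have h2 : H (f (s' + 1)) = gH 0 := hall (s' + 1) (by omega)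
        rw [hfs']
        rw [h2] at h1
        exact h1 hb
      exact hdisj b hbmem hb
    · push_neg at hall
      obtain ⟨t1, ht1, hne1⟩ := hall
      have hexist : ∃ t, t < l ∧ gH t ≠ gH (t + 1) := by
        by_contra hc
        push_neg at hc
        have hconst : ∀ t, t ≤ l → gH t = gH 0 := by
          intro t
          induction t with
          | zero => intro _; rfl
          | succ t ih =>
            intro ht
            rw [← hc t (by omega)]
            exact ih (by omega)
        exact hne1 (hconst t1 ht1)
      have hstepH : ∀ t, t < l → gH t = gH (t + 1) ∨ TubingRel T (gH t) (gH (t + 1)) := by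
        intro t ht
        by_cases he : gH t = gH (t + 1)
        · exact Or.inl he
        · refine Or.inr ?_
          obtain ⟨hm1, hm2, hd1, a, ha, b, hb, hab⟩ := hstep t ht
          have hd : ∀ x ∈ gH t, x ∉ gH (t + 1) := by
            rcases hpairH t (by omega) (t + 1) (by omega) with h | h
            · exact absurd h he
            · exact h
          exact ⟨hgmem t (by omega), hgmem (t + 1) (by omega), hd,
            a, hH2 _ (hfT2 t (by omega)) ha, b, hH2 _ (hfT2 (t + 1) (by omega)) hb, hab⟩
      have hclosedH : gH 0 = gH l := by
        rw [hgH]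
        exact congrArg H (hf0.trans hfl.symm)
      exact extract_cycle p hn3 hp2 hp3 hmono hle T hTt hp4 l gH hl hclosedH
        hgmem hstepH hpairH hexist
  · -- crossing case
    push_neg at hB
    obtain ⟨σ, hσT, τ, hτT, hns, hnt, z, hzσ, hzτ⟩ := hB
    exact crossing_case p hn3 hp2 hp3 hmono hle σ τ (hTt σ hσT) (hTt τ hτT)
      (hp4 σ hσT) (hp4 τ hτT) z hzσ hzτ hns hnt
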